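/- Let ν > 1/2 and t ≥ 1. Define I_ν(t) = (2e^t(2t)^ν/(√π·Γ(ν+½)))·∫₀¹ e^{−2tu²} u^{2ν} (1−u²)^{ν−½} du. Then 0 < I_ν(t) ≤ e^t/√(2πt). -/

import Mathlib

noncomputable section

open Real MeasureTheory Set

/-- Modified Bessel function of the first kind of order `ν`, by its integral representation
(valid for `ν > −1/2`, `t > 0`). -/
def besselI (ν t : ℝ) : ℝ :=
  2 * Real.exp t * (2 * t) ^ ν / (Real.sqrt Real.pi * Real.Gamma (ν + 1/2)) *
    ∫ u in (0:ℝ)..1, Real.exp (-2 * t * u ^ 2) * u ^ (2 * ν) * (1 - u ^ 2) ^ (ν - 1/2)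

/-- Lemma 2.3 (v): for `ν > 1/2` and `t ≥ 1`, `0 < I_ν(t) ≤ e^t/√(2πt)`. -/
theorem stmt8 (ν t : ℝ) (hν : 1/2 < ν) (ht : 1 ≤ t) :
    0 < besselI ν t ∧ besselI ν t ≤ Real.exp t / Real.sqrt (2 * Real.pi * t) := by
  have ht0 : (0:ℝ) < t := lt_of_lt_of_le one_pos ht
  have hT : (0:ℝ) < 2 * t := by linarith
  have hG : 0 < Real.Gamma (ν + 1/2) := Real.Gamma_pos_of_pos (by linarith)
  have hS : 0 < Real.sqrt Real.pi := Real.sqrt_pos.mpr Real.pi_pos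
  have hc : 0 < 2 * Real.exp t * (2 * t) ^ ν / (Real.sqrt Real.pi * Real.Gamma (ν + 1/2)) := by
    apply div_pos
    · positivity
    · positivity
  set f : ℝ → ℝ := fun u => Real.exp (-2 * t * u ^ 2) * u ^ (2 * ν) * (1 - u ^ 2) ^ (ν - 1/2)
    with hf
  have hcont : Continuous f := by
    apply Continuous.mul
    apply Continuous.mul
    · exact Real.continuous_exp.comp (by continuity)
    · exact Real.continuous_rpow_const (by linarith)
    · exact (Real.continuous_rpow_const (by linarith)).comp (by continuity)
  have hint : IntervalIntegrable f volume 0 1 := hcont.intervalIntegrable 0 1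
  have hpos : 0 < ∫ u in (0:ℝ)..1, f u := by
    apply intervalIntegral.intervalIntegral_pos_of_pos_on hint _ one_pos
    intro x hx
    have hx0 : 0 < x := hx.1
    have hx1 : x < 1 := hx.2
    have h1x : 0 < 1 - x ^ 2 := by nlinarith
    have := Real.rpow_pos_of_pos hx0 (2 * ν)
    have := Real.rpow_pos_of_pos h1x (ν - 1/2)
    positivity
  constructor
  · exact mul_pos hc hpos
  · -- upper bound
    set g : ℝ → ℝ := fun u => u ^ (2 * ν) * Real.exp (-(2 * t) * u ^ 2) with hg
    have hgi : IntegrableOn g (Ioi 0) :=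
      integrableOn_rpow_mul_exp_neg_mul_sq hT (by linarith)
    have h1 : (∫ u in (0:ℝ)..1, f u) ≤ ∫ u in Ioi (0:ℝ), g u := by
      rw [intervalIntegral.integral_of_le zero_le_one]
      have step1 : (∫ u in Ioc (0:ℝ) 1, f u) ≤ ∫ u in Ioc (0:ℝ) 1, g u := by
        apply setIntegral_mono_on
          (hint.1.mono_set (by simp [Set.uIoc_of_le zero_le_one])).integrable
          (hgi.mono_set (fun x hx => hx.1)) measurableSet_Ioc
        intro x hx
        have hx0 : 0 < x := hx.1
        have hx1 : x ≤ 1 := hx.2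
        have h1x : 0 ≤ 1 - x ^ 2 := by nlinarith
        have hle1 : (1 - x ^ 2) ^ (ν - 1/2) ≤ 1 :=
          Real.rpow_le_one h1x (by nlinarith) (by linarith)
        have hexp : Real.exp (-2 * t * x ^ 2) = Real.exp (-(2 * t) * x ^ 2) := by ring_nf
        calc f x ≤ Real.exp (-2 * t * x ^ 2) * x ^ (2 * ν) * 1 := by
              apply mul_le_mul_of_nonneg_left hle1
              positivity
          _ = g x := by rw [hg]; simp [hexp]; ring
      refine step1.trans ?_
      apply setIntegral_mono_set hgi
      · filter_upwards [self_mem_ae_restrict (measurableSet_Ioi)] with x hx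
        have := Real.rpow_nonneg (le_of_lt hx) (2 * ν)
        positivity
      · exact HasSubset.Subset.eventuallyLE (fun x hx => hx.1)
    have hval : (∫ u in Ioi (0:ℝ), g u)
        = (2 * t) ^ (-(2 * ν + 1) / 2) * (1 / 2) * Real.Gamma (ν + 1/2) := by
      have := integral_rpow_mul_exp_neg_mul_rpow (p := 2) (q := 2 * ν) (b := 2 * t)
        two_pos (by linarith) hT
      rw [hg]
      simp only [← Real.rpow_two] at *
      rw [show (2 * ν + 1) / 2 = ν + 1/2 by ring] at this
      convert this using 2
    rw [hval] at h1
    calc besselI ν t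
        ≤ 2 * Real.exp t * (2 * t) ^ ν / (Real.sqrt Real.pi * Real.Gamma (ν + 1/2)) *
          ((2 * t) ^ (-(2 * ν + 1) / 2) * (1 / 2) * Real.Gamma (ν + 1/2)) := by
          unfold besselI
          exact mul_le_mul_of_nonneg_left h1 hc.le
      _ = Real.exp t / Real.sqrt (2 * Real.pi * t) := by
          have e1 : (2 * t) ^ ν * (2 * t) ^ (-(2 * ν + 1) / 2) = (2 * t) ^ (-(1:ℝ)/2) := by
            rw [← Real.rpow_add hT]; ring_nf
          have e2 : Real.sqrt (2 * Real.pi * t) = Real.sqrt Real.pi * Real.sqrt (2 * t) := by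
            rw [← Real.sqrt_mul Real.pi_pos.le]; ring_nf
          have e3 : (2 * t) ^ (-(1:ℝ)/2) = (Real.sqrt (2 * t))⁻¹ := by
            rw [Real.sqrt_eq_rpow, ← Real.rpow_neg hT.le]
            norm_num
          have hsT : 0 < Real.sqrt (2 * t) := Real.sqrt_pos.mpr hT
          have key : 2 * Real.exp t * (2 * t) ^ ν / (Real.sqrt Real.pi * Real.Gamma (ν + 1/2)) *
              ((2 * t) ^ (-(2 * ν + 1) / 2) * (1 / 2) * Real.Gamma (ν + 1/2))
              = Real.exp t * ((2 * t) ^ ν * (2 * t) ^ (-(2 * ν + 1) / 2)) / Real.sqrt Real.pi := by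
            field_simp
          rw [key, e1, e3, e2]
          field_simp
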